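/- Let X be a random vector in ℝ^d with E[X] = g, E[‖X − g‖²] ≤ σ², and ‖g‖ ≤ λ/2 for some λ > 0. Define X̃ = clip(X, λ). Then ‖E[X̃] − g‖² ≤ 16σ⁴/λ². -/

import Mathlib

open MeasureTheory

/-- Clipping operator: `clip x λ = min{1, λ/‖x‖} • x` (with `clip 0 λ = 0`). -/
noncomputable def clip {E : Type*} [NormedAddCommGroup E] [InnerProductSpace ℝ E]
    (x : E) (lam : ℝ) : E := (min 1 (lam / ‖x‖)) • x

lemma clip_eq_self {E : Type*} [NormedAddCommGroup E] [InnerProductSpace ℝ E]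
    {x : E} {lam : ℝ} (hlam : 0 < lam) (h : ‖x‖ ≤ lam) : clip x lam = x := by
  rcases eq_or_ne x 0 with rfl | hx
  · simp [clip]
  · have hx0 : 0 < ‖x‖ := norm_pos_iff.mpr hx
    have : (1:ℝ) ≤ lam / ‖x‖ := (one_le_div hx0).mpr h
    simp [clip, min_eq_left this]

lemma clip_norm_le {E : Type*} [NormedAddCommGroup E] [InnerProductSpace ℝ E]
    (x : E) {lam : ℝ} (hlam : 0 < lam) : ‖clip x lam‖ ≤ ‖x‖ := by
  rw [clip, norm_smul]
  have h1 : |min 1 (lam / ‖x‖)| ≤ 1 := by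
    rw [abs_le]
    constructor
    · have : (0:ℝ) ≤ min 1 (lam / ‖x‖) := le_min zero_le_one (by positivity)
      linarith
    · exact min_le_left _ _
  rw [Real.norm_eq_abs]
  nlinarith [norm_nonneg x, abs_nonneg (min 1 (lam / ‖x‖))]

lemma clip_sub_norm_le {E : Type*} [NormedAddCommGroup E] [InnerProductSpace ℝ E]
    (x g : E) {lam : ℝ} (hlam : 0 < lam) (hg : ‖g‖ ≤ lam / 2) :
    ‖clip x lam - x‖ ≤ 2 * ‖x - g‖ ^ 2 / lam := by
  by_cases h : ‖x‖ ≤ lam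
  · rw [clip_eq_self hlam h]
    simp only [sub_self, norm_zero]
    positivity
  · push_neg at h
    have hx0 : 0 < ‖x‖ := lt_trans hlam h
    have hmin : min 1 (lam / ‖x‖) = lam / ‖x‖ :=
      min_eq_right (le_of_lt ((div_lt_one hx0).mpr h))
    have hnorm : ‖clip x lam - x‖ = ‖x‖ - lam := by
      rw [clip, hmin]
      have : (lam / ‖x‖) • x - x = (lam / ‖x‖ - 1) • x := by
        rw [sub_smul, one_smul]
      rw [this, norm_smul, Real.norm_eq_abs,
        abs_of_nonpos (by nlinarith [(div_lt_one hx0).mpr h])]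
      field_simp
      ring
    rw [hnorm]
    have h1 : ‖x‖ - ‖g‖ ≤ ‖x - g‖ := norm_sub_norm_le x g
    have h2 : lam / 2 ≤ ‖x - g‖ := by linarith
    rw [le_div_iff₀ hlam]
    nlinarith

/-- Gorbunov et al. Lemma F.5, squared-bias form: if `E[X] = g`,
`E[‖X − g‖²] ≤ σ²` and `‖g‖ ≤ λ/2`, then `‖E[clip(X,λ)] − g‖² ≤ 16σ⁴/λ²`. -/
theorem clipping_bias_sq_of_bounded_variance {d : ℕ} {Ω : Type*} [MeasurableSpace Ω]
    (μ : Measure Ω) [IsProbabilityMeasure μ]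
    (X : Ω → EuclideanSpace ℝ (Fin d)) (hX : Measurable X) (hXint : Integrable X μ)
    (g : EuclideanSpace ℝ (Fin d)) (σ lam : ℝ) (hσ : 0 ≤ σ) (hlam : 0 < lam)
    (hmean : ∫ ω, X ω ∂μ = g)
    (hvarInt : Integrable (fun ω => ‖X ω - g‖ ^ 2) μ)
    (hvar : ∫ ω, ‖X ω - g‖ ^ 2 ∂μ ≤ σ ^ 2)
    (hg : ‖g‖ ≤ lam / 2) :
    ‖(∫ ω, clip (X ω) lam ∂μ) - g‖ ^ 2 ≤ 16 * σ ^ 4 / lam ^ 2 := by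
  have hclipMeas : Measurable (fun ω => clip (X ω) lam) := by
    unfold clip
    exact ((measurable_const.min (measurable_const.div hX.norm)).smul hX)
  have hclipInt : Integrable (fun ω => clip (X ω) lam) μ := by
    refine hXint.mono hclipMeas.aestronglyMeasurable ?_
    filter_upwards with ω
    exact clip_norm_le (X ω) hlam
  have key : ‖(∫ ω, clip (X ω) lam ∂μ) - g‖ ≤ 2 * σ ^ 2 / lam := by
    calc ‖(∫ ω, clip (X ω) lam ∂μ) - g‖
        = ‖∫ ω, (clip (X ω) lam - X ω) ∂μ‖ := by
          rw [integral_sub hclipInt hXint, hmean]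
      _ ≤ ∫ ω, ‖clip (X ω) lam - X ω‖ ∂μ := norm_integral_le_integral_norm _
      _ ≤ ∫ ω, 2 * ‖X ω - g‖ ^ 2 / lam ∂μ := by
          refine integral_mono_of_nonneg ?_ ((hvarInt.const_mul 2).div_const lam) ?_
          · filter_upwards with ω; positivity
          · filter_upwards with ω
            exact clip_sub_norm_le (X ω) g hlam hg
      _ = (2 / lam) * ∫ ω, ‖X ω - g‖ ^ 2 ∂μ := by
          rw [← integral_const_mul]
          congr 1; funext ω; ring
      _ ≤ 2 * σ ^ 2 / lam := by
          rw [mul_comm 2 (σ^2), mul_div_assoc, mul_comm (σ^2)]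
          exact mul_le_mul_of_nonneg_left hvar (by positivity)
  have hnn : 0 ≤ ‖(∫ ω, clip (X ω) lam ∂μ) - g‖ := norm_nonneg _
  have h2 : ‖(∫ ω, clip (X ω) lam ∂μ) - g‖ ^ 2 ≤ (2 * σ ^ 2 / lam) ^ 2 := by
    nlinarith
  calc ‖(∫ ω, clip (X ω) lam ∂μ) - g‖ ^ 2 ≤ (2 * σ ^ 2 / lam) ^ 2 := h2
    _ = 4 * σ ^ 4 / lam ^ 2 := by field_simp; ring
    _ ≤ 16 * σ ^ 4 / lam ^ 2 := by
        apply div_le_div_of_nonneg_right ?_ (by positivity)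
        · nlinarith
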